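/- Let l ≥ 1 and let φ_{ab} ∈ ℝ be given for all indices 1 ≤ b ≤ a ≤ l with φ_{aa} > 0 for all a and φ_{ab} ≥ 0 for all b < a. Then there exist p₁, …, p_l > 0 such that the symmetric matrix Q ∈ ℝ^{l×l} defined by Q_{aa} = p_a φ_{aa} for all a and Q_{ab} = Q_{ba} = −p_a φ_{ab} for all b < a is positive definite. -/

import Mathlib

open Matrix Finset

/-- Key analytic lemma: coercive weights exist for the quadratic form. -/
lemma key_quad : ∀ (n : ℕ) (φ : Fin n → Fin n → ℝ), (∀ a, 0 < φ a a) →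
    ∃ p : Fin n → ℝ, (∀ a, 0 < p a) ∧ ∃ c : ℝ, 0 < c ∧ ∀ x : Fin n → ℝ,
      c * ∑ a, x a ^ 2 ≤
        ∑ a, p a * (φ a a * x a ^ 2
          - 2 * ∑ b, (if b < a then φ a b * x a * x b else 0)) := by
  intro n
  induction n with
  | zero =>
      intro φ _
      exact ⟨fun _ => 1, fun a => a.elim0, 1, one_pos, fun x => by simp⟩
  | succ n ih =>
      intro φ hdiag
      obtain ⟨p', hp', c', hc', hF⟩ :=
        ih (fun a b => φ a.castSucc b.castSucc) (fun a => hdiag _)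
      set l : Fin (n + 1) := Fin.last n with hl
      set S : ℝ := ∑ b : Fin n, (φ l b.castSucc) ^ 2 with hS
      have hS0 : 0 ≤ S := Finset.sum_nonneg fun b _ => sq_nonneg _
      set δ : ℝ := c' * φ l l / (4 * (S + 1)) with hδ
      have hδ0 : 0 < δ := by
        apply div_pos (mul_pos hc' (hdiag l)); positivity
      have hδeq : δ * (4 * (S + 1)) = c' * φ l l := by
        rw [hδ, div_mul_cancel₀ _ (ne_of_gt (by linarith))]
      refine ⟨Fin.snoc p' δ, ?_, min (c' / 2) (δ * φ l l / 2), ?_, ?_⟩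
      · intro a
        refine Fin.lastCases ?_ (fun i => ?_) a
        · simpa using hδ0
        · simpa using hp' i
      · exact lt_min (half_pos hc') (half_pos (mul_pos hδ0 (hdiag l)))
      · intro x
        set x' : Fin n → ℝ := fun b => x b.castSucc with hx'
        -- decompose the big sum
        have hG :
            (∑ a : Fin (n+1), (Fin.snoc p' δ : Fin (n+1) → ℝ) a * (φ a a * x a ^ 2
              - 2 * ∑ b, (if b < a then φ a b * x a * x b else 0)))
            = (∑ a : Fin n, p' a * (φ a.castSucc a.castSucc * x' a ^ 2
                - 2 * ∑ b, (if b < a then φ a.castSucc b.castSucc * x' a * x' b else 0)))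
              + δ * (φ l l * x l ^ 2
                - 2 * ∑ b : Fin n, φ l b.castSucc * x l * x' b) := by
          rw [Fin.sum_univ_castSucc]
          congr 1
          · refine Finset.sum_congr rfl fun a _ => ?_
            rw [Fin.snoc_castSucc]
            congr 2
            rw [Fin.sum_univ_castSucc]
            have h1 : ¬ (Fin.last n < a.castSucc) := by
              exact not_lt_of_gt (Fin.castSucc_lt_last a)
            simp [h1, Fin.castSucc_lt_castSucc_iff, hx']
          · rw [Fin.snoc_last]
            congr 2
            rw [Fin.sum_univ_castSucc]
            simp [Fin.castSucc_lt_last, hx', hl]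
        rw [hG, Fin.sum_univ_castSucc]
        have hFx := hF x'
        set A : ℝ := ∑ b : Fin n, x' b ^ 2 with hA
        have hA0 : 0 ≤ A := Finset.sum_nonneg fun b _ => sq_nonneg _
        set B : ℝ := ∑ b : Fin n, φ l b.castSucc * x l * x' b with hB
        have hsum : c' * (2 * δ * B) ≤ c' ^ 2 / 2 * A + 2 * δ ^ 2 * S * x l ^ 2 := by
          have h1 : ∀ b ∈ (univ : Finset (Fin n)),
              2 * c' * δ * (φ l b.castSucc * x l * x' b)
                ≤ c' ^ 2 / 2 * x' b ^ 2 + 2 * δ ^ 2 * (φ l b.castSucc) ^ 2 * x l ^ 2 := by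
            intro b _
            nlinarith [sq_nonneg (c' * x' b - 2 * δ * φ l b.castSucc * x l)]
          calc c' * (2 * δ * B) = ∑ b : Fin n, 2 * c' * δ * (φ l b.castSucc * x l * x' b) := by
                rw [hB, Finset.mul_sum, Finset.mul_sum]
                exact Finset.sum_congr rfl fun b _ => by ring
            _ ≤ ∑ b : Fin n, (c' ^ 2 / 2 * x' b ^ 2 + 2 * δ ^ 2 * (φ l b.castSucc) ^ 2 * x l ^ 2) :=
                Finset.sum_le_sum h1
            _ = c' ^ 2 / 2 * A + 2 * δ ^ 2 * S * x l ^ 2 := by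
                rw [Finset.sum_add_distrib, hA, Finset.mul_sum, hS, Finset.mul_sum,
                  Finset.sum_mul]
        -- now the numeric conclusion
        set c : ℝ := min (c' / 2) (δ * φ l l / 2)
        have hc1 : c ≤ c' / 2 := min_le_left _ _
        have hc2 : c ≤ δ * φ l l / 2 := min_le_right _ _
        have hgoal : c' * (c * (A + x (Fin.last n) ^ 2))
            ≤ c' * ((∑ a : Fin n, p' a * (φ a.castSucc a.castSucc * x' a ^ 2
                - 2 * ∑ b, (if b < a then φ a.castSucc b.castSucc * x' a * x' b else 0)))
              + δ * (φ l l * x l ^ 2 - 2 * B)) := by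
          have h1 : c * A ≤ c' / 2 * A := mul_le_mul_of_nonneg_right hc1 hA0
          have h2 : c * x l ^ 2 ≤ δ * φ l l / 2 * x l ^ 2 :=
            mul_le_mul_of_nonneg_right hc2 (sq_nonneg _)
          have h3 : c' * (c' * A) ≤ c' *
              (∑ a : Fin n, p' a * (φ a.castSucc a.castSucc * x' a ^ 2
                - 2 * ∑ b, (if b < a then φ a.castSucc b.castSucc * x' a * x' b else 0))) :=
            mul_le_mul_of_nonneg_left hFx hc'.le
          have h4 : 0 ≤ δ ^ 2 * x l ^ 2 := by positivity
          nlinarith [mul_le_mul_of_nonneg_left h1 hc'.le,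
            mul_le_mul_of_nonneg_left h2 hc'.le, hδeq, sq_nonneg (x l)]
        have := le_of_mul_le_mul_left hgoal hc'
        simpa [hx', hl] using this

lemma quad_eq (n : ℕ) (p : Fin n → ℝ) (φ : Fin n → Fin n → ℝ) (x : Fin n → ℝ) :
    x ⬝ᵥ ((Matrix.of fun a b : Fin n =>
        if a = b then p a * φ a a
        else if b < a then -(p a * φ a b)
        else -(p b * φ b a)) *ᵥ x)
    = ∑ a, p a * (φ a a * x a ^ 2
        - 2 * ∑ b, (if b < a then φ a b * x a * x b else 0)) := by
  set Q : Matrix (Fin n) (Fin n) ℝ := Matrix.of fun a b : Fin n =>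
      if a = b then p a * φ a a
      else if b < a then -(p a * φ a b)
      else -(p b * φ b a) with hQ
  have hQd : ∀ a, Q a a = p a * φ a a := fun a => by simp [hQ]
  have hQl : ∀ a b, b < a → Q a b = -(p a * φ a b) := fun a b h => by
    simp [hQ, (h.ne').symm, h]
    intro he; exact absurd he (h.ne').elim
  have hQu : ∀ a b, a < b → Q a b = -(p b * φ b a) := fun a b h => by
    simp [hQ, h.ne, not_lt_of_gt h]
  have split : ∀ a b : Fin n, x a * Q a b * x b =
      (if b = a then p a * φ a a * x a ^ 2 else 0)
      + (if b < a then -(p a * φ a b) * x a * x b else 0)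
      + (if a < b then -(p b * φ b a) * x a * x b else 0) := by
    intro a b
    rcases lt_trichotomy a b with h | h | h
    · rw [hQu a b h, if_neg h.ne', if_neg (not_lt_of_gt h), if_pos h]
      ring
    · subst h
      rw [hQd a, if_pos rfl, if_neg (lt_irrefl a)]
      ring
    · rw [hQl a b h, if_neg h.ne, if_pos h, if_neg (not_lt_of_gt h)]
      ring
  calc x ⬝ᵥ (Q *ᵥ x) = ∑ a, ∑ b, x a * Q a b * x b := by
        simp [dotProduct, mulVec, Finset.mul_sum, mul_assoc]
    _ = ∑ a, ∑ b, ((if b = a then p a * φ a a * x a ^ 2 else 0)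
          + (if b < a then -(p a * φ a b) * x a * x b else 0)
          + (if a < b then -(p b * φ b a) * x a * x b else 0)) := by
        exact Finset.sum_congr rfl fun a _ => Finset.sum_congr rfl fun b _ => split a b
    _ = ∑ a, p a * (φ a a * x a ^ 2
        - 2 * ∑ b, (if b < a then φ a b * x a * x b else 0)) := by
        simp only [Finset.sum_add_distrib]
        have e1 : ∀ a : Fin n, ∑ b, (if b = a then p a * φ a a * x a ^ 2 else 0)
            = p a * φ a a * x a ^ 2 := fun a => by simp
        have e3 : (∑ a, ∑ b, (if a < b then -(p b * φ b a) * x a * x b else 0))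
            = ∑ a, ∑ b, (if b < a then -(p a * φ a b) * x a * x b else 0) := by
          rw [Finset.sum_comm]
          refine Finset.sum_congr rfl fun a _ => Finset.sum_congr rfl fun b _ => ?_
          split_ifs <;> ring
        simp only [e1]
        rw [e3]
        rw [← Finset.sum_add_distrib, ← Finset.sum_add_distrib]
        refine Finset.sum_congr rfl fun a _ => ?_
        have e4 : ∑ b, (if b < a then -(p a * φ a b) * x a * x b else 0)
            = -(p a) * ∑ b, (if b < a then φ a b * x a * x b else 0) := by
          rw [Finset.mul_sum]
          refine Finset.sum_congr rfl fun b _ => ?_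
          split_ifs <;> ring
        rw [e4]
        ring

/-- Given `φ_{ab}` for `b ≤ a` with positive diagonal and nonnegative off-diagonal
entries, one can choose weights `p_a > 0` so that the symmetric matrix `Q` with
`Q_{aa} = p_a φ_{aa}` and `Q_{ab} = Q_{ba} = −p_a φ_{ab}` for `b < a` is positive
definite. -/
theorem exists_weights_posDef
    (l : ℕ) (hl : 1 ≤ l) (φ : Fin l → Fin l → ℝ)
    (hdiag : ∀ a : Fin l, 0 < φ a a)
    (hoff : ∀ a b : Fin l, b < a → 0 ≤ φ a b) :
    ∃ p : Fin l → ℝ, (∀ a, 0 < p a) ∧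
      (Matrix.of fun a b : Fin l =>
        if a = b then p a * φ a a
        else if b < a then -(p a * φ a b)
        else -(p b * φ b a)).PosDef := by
  obtain ⟨p, hp, c, hc, hquad⟩ := key_quad l φ hdiag
  refine ⟨p, hp, Matrix.PosDef.of_dotProduct_mulVec_pos ?_ ?_⟩
  · -- Hermitian
    ext a b
    simp only [Matrix.conjTranspose_apply, Matrix.of_apply, star_trivial]
    rcases lt_trichotomy a b with h | h | h
    · rw [if_neg h.ne', if_pos h, if_neg h.ne, if_neg (not_lt_of_gt h)]
    · subst h; rfl
    · rw [if_neg h.ne, if_neg (not_lt_of_gt h), if_neg h.ne', if_pos h]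
  · intro x hx
    have hpos : 0 < ∑ a, x a ^ 2 := by
      obtain ⟨a, ha⟩ := Function.ne_iff.mp hx
      exact Finset.sum_pos' (fun i _ => sq_nonneg _)
        ⟨a, Finset.mem_univ a, lt_of_le_of_ne (sq_nonneg _) (Ne.symm (pow_ne_zero 2 ha))⟩
    have := (mul_pos hc hpos).trans_le (hquad x)
    rw [← quad_eq l p φ x] at this
    simpa using this
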